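/- Let T ⊆ ℝ be Lebesgue-measurable with positive measure (respectively: Baire non-meagre), let (zₙ) be a sequence of reals converging to 0, and let p ∈ ℕ. Then for almost every (resp. quasi every) t ∈ T there is an infinite set M ⊆ ℕ such that for every m ∈ M the whole block t + z_{pm+1}, t + z_{pm+2}, …, t + z_{pm+p} lies in T. -/

import Mathlib

open MeasureTheory Filter Set Topology

open scoped symmDiff ENNReal

/-- Translation continuity of measure: for a finite-measure null measurable set `s ⊆ ℝ`,
the measure of the symmetric difference of `s` and its translate by `z j` tends to `0`. -/
lemma translate_symmDiff_tendsto_zero {z : ℕ → ℝ} (hz : Tendsto z atTop (𝓝 0))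
    {s : Set ℝ} (hs : MeasurableSet s) (hfin : volume s ≠ ∞) :
    Tendsto (fun j => volume ({x | x + z j ∈ s} ∆ s)) atTop (𝓝 0) := by
  set F : ℝ → C(ℝ, ℝ) := fun h => ⟨fun x => x + h, by continuity⟩ with hF
  have hFc : Continuous F := by
    apply ContinuousMap.continuous_of_continuous_uncurry
    exact continuous_snd.add continuous_fst
  have h1 : Tendsto (fun j => F (z j)) atTop (𝓝 (F 0)) := (hFc.tendsto 0).comp hz
  have hmp : ∀ h : ℝ, MeasurePreserving (F h) volume volume := fun h =>
    measurePreserving_add_right volume h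
  have := tendsto_measure_symmDiff_preimage_nhds_zero (μ := volume) (ν := volume) h1
    (Eventually.of_forall fun j => hmp (z j)) (hmp 0) hs.nullMeasurableSet hfin
  have hF0 : (F 0) ⁻¹' s = s := by
    ext x; simp [hF]
  rw [hF0] at this
  exact this

theorem stmt_18 (T : Set ℝ) (z : ℕ → ℝ) (hz : Tendsto z atTop (𝓝 0)) (p : ℕ) (hp : 0 < p) :
    (MeasurableSet T → 0 < volume T →
      ∃ N : Set ℝ, volume N = 0 ∧ ∀ t ∈ T \ N,
        ∃ M : Set ℕ, M.Infinite ∧ ∀ m ∈ M, ∀ i : ℕ, 1 ≤ i → i ≤ p →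
          t + z (p * m + i) ∈ T) ∧
    (BaireMeasurableSet T → ¬ IsMeagre T →
      ∃ N : Set ℝ, IsMeagre N ∧ ∀ t ∈ T \ N,
        ∃ M : Set ℕ, M.Infinite ∧ ∀ m ∈ M, ∀ i : ℕ, 1 ≤ i → i ≤ p →
          t + z (p * m + i) ∈ T) := by
  -- the blocks
  set A : ℕ → Set ℝ := fun m => {x | ∀ i ∈ Finset.Icc 1 p, x + z (p * m + i) ∈ T} with hA
  constructor
  · -- measure case
    intro hT _
    set Tb : ℕ → Set ℝ := fun n => T ∩ Set.Ioo (-(n : ℝ)) n with hTb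
    have hTbm : ∀ n, MeasurableSet (Tb n) := fun n => hT.inter measurableSet_Ioo
    have hTbfin : ∀ n, volume (Tb n) ≠ ∞ := by
      intro n
      exact ne_top_of_le_ne_top (by simp) (measure_mono inter_subset_right)
    have key : ∀ n, Tendsto (fun j => volume ({x | x + z j ∈ Tb n} ∆ Tb n)) atTop (𝓝 0) :=
      fun n => translate_symmDiff_tendsto_zero hz (hTbm n) (hTbfin n)
    -- the crucial null sets
    have hnull : ∀ n k, volume (Tb n \ ⋃ m ∈ Set.Ici k, A m) = 0 := by
      intro n k
      have hbound : ∀ m, volume (Tb n \ A m) ≤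
          ∑ i ∈ Finset.Icc 1 p, volume ({x | x + z (p * m + i) ∈ Tb n} ∆ Tb n) := by
        intro m
        have hsub : Tb n \ A m ⊆
            ⋃ i ∈ Finset.Icc 1 p, ({x | x + z (p * m + i) ∈ Tb n} ∆ Tb n) := by
          intro x hx
          obtain ⟨hx1, hx2⟩ := hx
          simp only [hA, mem_setOf_eq, not_forall] at hx2
          obtain ⟨i, hi, hxi⟩ := hx2
          refine mem_iUnion₂.2 ⟨i, hi, ?_⟩
          have : x ∉ {y | y + z (p * m + i) ∈ Tb n} := fun h => hxi h.1
          exact Or.inr ⟨hx1, this⟩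
        exact le_trans (measure_mono hsub) (measure_biUnion_finset_le _ _)
      have hterm : ∀ i : ℕ, Tendsto
          (fun m => volume ({x | x + z (p * m + i) ∈ Tb n} ∆ Tb n)) atTop (𝓝 0) := by
        intro i
        have hcomp : Tendsto (fun m => p * m + i) atTop atTop :=
          tendsto_atTop_mono (fun m => le_trans (Nat.le_mul_of_pos_left m hp)
            (Nat.le_add_right _ _)) tendsto_id
        exact (key n).comp hcomp
      have hsum : Tendsto (fun m => ∑ i ∈ Finset.Icc 1 p,
          volume ({x | x + z (p * m + i) ∈ Tb n} ∆ Tb n)) atTop (𝓝 0) := by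
        have := tendsto_finset_sum (Finset.Icc 1 p)
          (fun (i : ℕ) (_ : i ∈ Finset.Icc 1 p) => hterm i)
        simpa using this
      have hle : ∀ m ≥ k, volume (Tb n \ ⋃ m ∈ Set.Ici k, A m) ≤
          ∑ i ∈ Finset.Icc 1 p, volume ({x | x + z (p * m + i) ∈ Tb n} ∆ Tb n) := by
        intro m hm
        refine le_trans (measure_mono ?_) (hbound m)
        exact diff_subset_diff_right (subset_biUnion_of_mem hm)
      have := ge_of_tendsto hsum (eventually_atTop.2 ⟨k, hle⟩)
      exact le_antisymm this zero_le
    refine ⟨⋃ n, ⋃ k, (Tb n \ ⋃ m ∈ Set.Ici k, A m), ?_, ?_⟩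
    · exact measure_iUnion_null fun n => measure_iUnion_null fun k => hnull n k
    · rintro t ⟨htT, htN⟩
      obtain ⟨n, hn⟩ := exists_nat_gt |t|
      have htb : t ∈ Tb n := ⟨htT, by constructor <;> [linarith [neg_abs_le t]; linarith [le_abs_self t]]⟩
      simp only [mem_iUnion, not_exists] at htN
      refine ⟨{m | t ∈ A m}, ?_, ?_⟩
      · apply Set.infinite_of_forall_exists_gt
        intro a
        have := htN n (a + 1)
        have ht' : t ∈ ⋃ m ∈ Set.Ici (a + 1), A m := by
          by_contra h
          exact this ⟨htb, h⟩
        obtain ⟨m, hm, hmA⟩ := mem_iUnion₂.1 ht'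
        exact ⟨m, hmA, lt_of_lt_of_le (Nat.lt_succ_self a) hm⟩
      · intro m hm i hi1 hi2
        exact hm i (Finset.mem_Icc.2 ⟨hi1, hi2⟩)
  · -- Baire case
    intro hT _
    obtain ⟨U, hUo, hTU⟩ := hT.residualEq_isOpen
    set D : Set ℝ := (T \ U) ∪ (U \ T) with hD
    have hDmeagre : IsMeagre D := by
      show Dᶜ ∈ residual ℝ
      apply Filter.mem_of_superset hTU
      intro x hx
      simp only [hD, mem_compl_iff, mem_union, mem_diff, not_or, not_and, not_not]
      have hx' : (x ∈ T) = (x ∈ U) := hx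
      constructor
      · intro hxT; rw [← hx']; exact hxT
      · intro hxU; rw [hx']; exact hxU
    set N : Set ℝ := (T \ U) ∪ ⋃ j, {x | x + z j ∈ D} with hN
    have hNmeagre : IsMeagre N := by
      have h1 : IsMeagre (T \ U) := hDmeagre.mono subset_union_left
      have h2 : IsMeagre (⋃ j, {x : ℝ | x + z j ∈ D}) := by
        apply isMeagre_iUnion
        intro j
        have heq : {x : ℝ | x + z j ∈ D} = (fun x => x + z j) ⁻¹' D := rfl
        rw [heq]
        exact hDmeagre.preimage_of_isOpenMap (continuous_add_right _)
          (Homeomorph.addRight (z j)).isOpenMap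
      show Nᶜ ∈ residual ℝ
      rw [hN, Set.compl_union]
      exact Filter.inter_mem h1 h2
    refine ⟨N, hNmeagre, ?_⟩
    rintro t ⟨htT, htN⟩
    simp only [hN, mem_union, mem_iUnion, not_or, not_exists, mem_diff, not_and, not_not,
      mem_setOf_eq] at htN
    obtain ⟨htU', htD⟩ := htN
    have htU : t ∈ U := htU' htT
    have hconv : Tendsto (fun j => t + z j) atTop (𝓝 t) := by
      have := (tendsto_const_nhds (x := t) (f := atTop (α := ℕ))).add hz
      simpa using this
    have hev : ∀ᶠ j in atTop, t + z j ∈ U := hconv.eventually (hUo.mem_nhds htU)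
    obtain ⟨k, hk⟩ := eventually_atTop.1 hev
    refine ⟨Set.Ici k, Set.Ici_infinite k, ?_⟩
    intro m hm i hi1 hi2
    have hidx : k ≤ p * m + i :=
      le_trans hm (le_trans (Nat.le_mul_of_pos_left m hp) (Nat.le_add_right _ _))
    have h1 : t + z (p * m + i) ∈ U := hk _ hidx
    have h2 : t + z (p * m + i) ∉ D := htD _
    simp only [hD, mem_union, mem_diff, not_or, not_and, not_not] at h2
    exact h2.2 h1
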